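/- Let λ, μ be partitions with at most n parts. If λ is not contained in μ (i.e. λ_i > μ_i for some i), then the factorial Schur function satisfies s_λ(a_μ|a) = 0, where (a_μ)_i = a_{n+1−i+μ_i}. -/

import Mathlib

structure SSYT (n : ℕ) (lam : Fin n → ℕ) where
  entry : ∀ i : Fin n, Fin (lam i) → Fin n
  rowWeak : ∀ (i : Fin n) (j k : Fin (lam i)), j ≤ k → entry i j ≤ entry i k
  colStrict : ∀ (i i' : Fin n) (_ : i < i') (j : Fin (lam i')) (hj : (j : ℕ) < lam i),
    entry i ⟨j, hj⟩ < entry i' j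

instance (n : ℕ) (lam : Fin n → ℕ) : Finite (SSYT n lam) :=
  Finite.of_injective (fun T => T.entry) (fun T T' h => by cases T; cases T'; simpa using h)

noncomputable instance (n : ℕ) (lam : Fin n → ℕ) : Fintype (SSYT n lam) :=
  Fintype.ofFinite _

/-- The factorial Schur function `s_λ(x|a)`, as a sum over semistandard Young tableaux of
shape `λ` (rows indexed by `i : Fin n`, row `i` having cells `j : Fin (lam i)`) with entries
in `{1,…,n}` (encoded `0`-based as `Fin n`): the entry of cell `(i,j)` is `T.entry i j + 1`,
its content is `(j+1) - (i+1) = j - i`. -/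
noncomputable def facSchur (n : ℕ) (lam : Fin n → ℕ) {R : Type*} [CommRing R]
    (x : Fin n → R) (a : ℤ → R) : R :=
  ∑ T : SSYT n lam, ∏ i : Fin n, ∏ j : Fin (lam i),
    (x (T.entry i j) - a ((T.entry i j : ℤ) + 1 + (j : ℤ) - (i : ℤ)))


namespace FacSchurAux

variable {R : Type*} [CommRing R]

lemma telescope (a : ℤ → R) (c : ℤ) (x y : R) (p q : ℕ) :
    (∏ j ∈ Finset.Ico p q, (x - a (c + j))) - (∏ j ∈ Finset.Ico p q, (y - a (c + j))) =
    (x - y) * ∑ e ∈ Finset.Ico p q, (∏ j ∈ Finset.Ico p e, (x - a (c + j))) *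
      (∏ j ∈ Finset.Ico (e+1) q, (y - a (c + j))) := by
  induction q with
  | zero => rw [Finset.Ico_eq_empty (by omega)]; simp
  | succ q ih =>
    by_cases hpq : p ≤ q
    · rw [Finset.prod_Ico_succ_top hpq, Finset.prod_Ico_succ_top hpq,
        Finset.sum_Ico_succ_top hpq]
      have hsplit : ∀ e ∈ Finset.Ico p q,
          (∏ j ∈ Finset.Ico p e, (x - a (c + j))) *
            (∏ j ∈ Finset.Ico (e+1) (q+1), (y - a (c + j)))
          = ((∏ j ∈ Finset.Ico p e, (x - a (c + j))) *
              (∏ j ∈ Finset.Ico (e+1) q, (y - a (c + j)))) * (y - a (c + q)) := by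
        intro e he
        rw [Finset.prod_Ico_succ_top (Nat.succ_le_of_lt (Finset.mem_Ico.mp he).2)]
        ring
      rw [Finset.sum_congr rfl hsplit, ← Finset.sum_mul, Finset.Ico_self,
        Finset.prod_empty, mul_one]
      linear_combination (y - a (c + (q:ℤ))) * ih
    · rw [Finset.Ico_eq_empty (show ¬ p < q + 1 by omega)]
      simp

/-- truncated two-variable factorial `h`-sum. -/
def Hsum (a : ℤ → R) (c : ℤ) (p q : ℕ) (x y : R) : R :=
  ∑ e ∈ Finset.Icc p q, (∏ j ∈ Finset.Ico p e, (x - a (c + j))) *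
    ∏ j ∈ Finset.Ico e q, (y - a (c + j + 1))

lemma Hsum_rec (a : ℤ → R) (c : ℤ) (p q : ℕ) (x y : R) (hpq : p < q) :
    Hsum a c p q x y = (∏ j ∈ Finset.Ico p q, (y - a (c + j + 1)))
      + (x - a (c + p)) * Hsum a c (p+1) q x y := by
  unfold Hsum
  rw [show Finset.Icc p q = insert p (Finset.Icc (p+1) q) by ext e; simp; omega]
  rw [Finset.sum_insert (by simp)]
  rw [Finset.Ico_self, Finset.prod_empty, one_mul, Finset.mul_sum]
  congr 1
  refine Finset.sum_congr rfl (fun e he => ?_)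
  have he' : p + 1 ≤ e := (Finset.mem_Icc.mp he).1
  rw [show Finset.Ico p e = insert p (Finset.Ico (p+1) e) by ext j; simp; omega]
  rw [Finset.prod_insert (by simp), mul_assoc]

lemma Hsum_symm_aux (a : ℤ → R) (c : ℤ) (x y : R) :
    ∀ d p, Hsum a c p (p+d) x y = Hsum a c p (p+d) y x := by
  intro d
  induction d with
  | zero => intro p; simp [Hsum]
  | succ d ih =>
    intro p
    have hlt : p < p + (d+1) := by omega
    have hshift : ∀ z w : R, Hsum a c (p+1) (p+(d+1)) z w =
        ∑ e ∈ Finset.Ico p (p+(d+1)), (∏ j ∈ Finset.Ico p e, (z - a (c + 1 + j))) *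
          (∏ j ∈ Finset.Ico (e+1) (p+(d+1)), (w - a (c + 1 + j))) := by
      intro z w
      unfold Hsum
      rw [show Finset.Icc (p+1) (p+(d+1)) = Finset.Ico (p+1) (p+(d+1)+1) from
        (Finset.Ico_add_one_right_eq_Icc ..).symm]
      rw [show Finset.Ico (p+1) (p+(d+1)+1) =
        Finset.map (addRightEmbedding 1) (Finset.Ico p (p+(d+1))) by
          rw [Finset.map_add_right_Ico]]
      rw [Finset.sum_map]
      refine Finset.sum_congr rfl (fun e he => ?_)
      simp only [addRightEmbedding_apply]
      congr 1
      · rw [show Finset.Ico (p+1) (e+1) =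
          Finset.map (addRightEmbedding 1) (Finset.Ico p e) by rw [Finset.map_add_right_Ico]]
        rw [Finset.prod_map]
        refine Finset.prod_congr rfl (fun j _ => ?_)
        simp only [addRightEmbedding_apply]
        congr 1
        push_cast; ring
      · refine Finset.prod_congr rfl (fun j _ => ?_)
        congr 1
        ring
    have hnorm : ∀ z : R, (∏ j ∈ Finset.Ico p (p+(d+1)), (z - a (c + j + 1)))
        = ∏ j ∈ Finset.Ico p (p+(d+1)), (z - a (c + 1 + j)) :=
      fun z => Finset.prod_congr rfl (fun j _ => by
        rw [show c + (j:ℤ) + 1 = c + 1 + (j:ℤ) by ring])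
    have key : (∏ j ∈ Finset.Ico p (p+(d+1)), (x - a (c + 1 + j)))
        - (∏ j ∈ Finset.Ico p (p+(d+1)), (y - a (c + 1 + j)))
        = (x - y) * Hsum a c (p+1) (p+(d+1)) x y := by
      rw [hshift x y]
      exact telescope a (c+1) x y p (p+(d+1))
    have ihp : Hsum a c (p+1) (p+(d+1)) x y = Hsum a c (p+1) (p+(d+1)) y x := by
      have := ih (p+1)
      rwa [show p + 1 + d = p + (d+1) by omega] at this
    rw [Hsum_rec a c p _ x y hlt, Hsum_rec a c p _ y x hlt, hnorm x, hnorm y]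
    linear_combination (y - a (c + (p:ℤ))) * ihp - key

lemma Hsum_symm (a : ℤ → R) (c : ℤ) (p q : ℕ) (x y : R) :
    Hsum a c p q x y = Hsum a c p q y x := by
  by_cases h : p ≤ q
  · obtain ⟨d, rfl⟩ := Nat.exists_eq_add_of_le h
    exact Hsum_symm_aux a c x y d p
  · unfold Hsum; rw [Finset.Icc_eq_empty (by omega)]; simp

lemma Hsum_trunc (a : ℤ → R) (c : ℤ) (p q m M : ℕ) (x y : R) (hpm : p ≤ m) (hMq : M ≤ q) :
    ∑ e ∈ Finset.Icc m M, (∏ j ∈ Finset.Ico p e, (x - a (c + j))) *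
      (∏ j ∈ Finset.Ico e q, (y - a (c + j + 1)))
    = (∏ j ∈ Finset.Ico p m, (x - a (c + j))) *
      (∏ j ∈ Finset.Ico M q, (y - a (c + j + 1))) * Hsum a c m M x y := by
  unfold Hsum
  rw [Finset.mul_sum]
  refine Finset.sum_congr rfl (fun e he => ?_)
  obtain ⟨hme, heM⟩ := Finset.mem_Icc.mp he
  rw [← Finset.prod_Ico_consecutive _ hpm hme, ← Finset.prod_Ico_consecutive _ heM hMq]
  ring



/-! ### Counting helpers -/

lemma card_filter_val_lt {N : ℕ} (c : ℕ) (hc : c ≤ N) :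
    ((Finset.univ : Finset (Fin N)).filter fun j : Fin N => (j:ℕ) < c).card = c := by
  refine Finset.card_eq_of_bijective (fun v hv => ⟨v, lt_of_lt_of_le hv hc⟩) ?_ ?_ ?_
  · intro j hj
    exact ⟨(j:ℕ), (Finset.mem_filter.mp hj).2, rfl⟩
  · intro v hv
    simp [hv]
  · intro v w hv hw h
    simpa using congrArg Fin.val h

lemma downward_iff {N : ℕ} (p : Fin N → Prop) [DecidablePred p]
    (hdc : ∀ j j' : Fin N, j' ≤ j → p j → p j') (j : Fin N) :
    p j ↔ (j:ℕ) < (Finset.univ.filter p).card := by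
  constructor
  · intro hpj
    have hsub : ((Finset.univ : Finset (Fin N)).filter fun j' : Fin N => (j':ℕ) < (j:ℕ)+1)
        ⊆ Finset.univ.filter p := by
      intro j' hj'
      simp only [Finset.mem_filter, Finset.mem_univ, true_and] at hj' ⊢
      exact hdc j j' (Fin.le_def.mpr (by omega)) hpj
    have := Finset.card_le_card hsub
    rw [card_filter_val_lt ((j:ℕ)+1) (by omega)] at this
    omega
  · intro h
    by_contra hnp
    have hsub : Finset.univ.filter p
        ⊆ (Finset.univ : Finset (Fin N)).filter fun j' : Fin N => (j':ℕ) < (j:ℕ) := by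
      intro j' hj'
      simp only [Finset.mem_filter, Finset.mem_univ, true_and] at hj' ⊢
      by_contra hge
      exact hnp (hdc j' j (Fin.le_def.mpr (by omega)) hj')
    have := Finset.card_le_card hsub
    rw [card_filter_val_lt (j:ℕ) (le_of_lt j.isLt)] at this
    omega

/-! ### Flags -/

variable (n : ℕ) (lam : Fin n → ℕ)

def IsFlag (ρ : Fin (n+1) → Fin n → ℕ) : Prop :=
  (∀ i, ρ 0 i = 0) ∧ (∀ i, ρ (Fin.last n) i = lam i) ∧
  (∀ (m i : Fin n), ρ m.castSucc i ≤ ρ m.succ i) ∧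
  (∀ (m i : Fin n) (h : (i:ℕ)+1 < n), ρ m.succ ⟨(i:ℕ)+1, h⟩ ≤ ρ m.castSucc i)

variable {n lam}

lemma IsFlag.mono {ρ : Fin (n+1) → Fin n → ℕ} (hρ : IsFlag n lam ρ)
    {u v : ℕ} (hu : u ≤ n) (hv : v ≤ n) (huv : u ≤ v) (i : Fin n) :
    ρ ⟨u, by omega⟩ i ≤ ρ ⟨v, by omega⟩ i := by
  induction v with
  | zero => have : u = 0 := by omega
            subst this; exact le_refl _
  | succ v ih =>
    rcases Nat.lt_or_ge u (v+1) with h | h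
    · have h1 : u ≤ v := by omega
      refine le_trans (ih (by omega) h1) ?_
      have := hρ.2.2.1 ⟨v, by omega⟩ i
      simpa using this
    · have : u = v + 1 := by omega
      subst this; exact le_refl _

lemma IsFlag.mono' {ρ : Fin (n+1) → Fin n → ℕ} (hρ : IsFlag n lam ρ)
    {u v : Fin (n+1)} (huv : u ≤ v) (i : Fin n) : ρ u i ≤ ρ v i := by
  have := hρ.mono (Nat.le_of_lt_succ u.isLt) (Nat.le_of_lt_succ v.isLt) huv i
  simpa using this

lemma IsFlag.le_lam {ρ : Fin (n+1) → Fin n → ℕ} (hρ : IsFlag n lam ρ)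
    (m : Fin (n+1)) (i : Fin n) : ρ m i ≤ lam i := by
  have := hρ.mono' (u := m) (v := Fin.last n) (Fin.le_last m) i
  rwa [hρ.2.1 i] at this

open Classical in
noncomputable def flagFinset : Finset (Fin (n+1) → Fin n → ℕ) :=
  Finset.filter (IsFlag n lam)
    (Fintype.piFinset fun _ : Fin (n+1) => Fintype.piFinset fun i : Fin n =>
      Finset.range (lam i + 1))

lemma mem_flagFinset {ρ : Fin (n+1) → Fin n → ℕ} :
    ρ ∈ (flagFinset (n := n) (lam := lam)) ↔ IsFlag n lam ρ := by
  classical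
  unfold flagFinset
  rw [Finset.mem_filter]
  constructor
  · exact fun h => h.2
  · intro h
    refine ⟨?_, h⟩
    rw [Fintype.mem_piFinset]
    intro m
    rw [Fintype.mem_piFinset]
    intro i
    rw [Finset.mem_range]
    exact Nat.lt_succ_of_le (h.le_lam m i)

variable (n lam) in
noncomputable def flagWeight {R : Type*} [CommRing R] (x : Fin n → R) (a : ℤ → R)
    (ρ : Fin (n+1) → Fin n → ℕ) : R :=
  ∏ m : Fin n, ∏ i : Fin n, ∏ j ∈ Finset.Ico (ρ m.castSucc i) (ρ m.succ i),
    (x m - a ((m:ℤ) + 1 + (j:ℤ) - (i:ℤ)))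

/-! ### from SSYT to flags -/

variable (T : SSYT n lam)

def rhoOf (m : Fin (n+1)) (i : Fin n) : ℕ :=
  ((Finset.univ : Finset (Fin (lam i))).filter fun j : Fin (lam i) => (T.entry i j : ℕ) < (m:ℕ)).card

lemma rho_char (m : Fin (n+1)) (i : Fin n) (j : Fin (lam i)) :
    (T.entry i j : ℕ) < (m:ℕ) ↔ (j:ℕ) < rhoOf T m i := by
  unfold rhoOf
  exact downward_iff (fun j : Fin (lam i) => (T.entry i j : ℕ) < (m:ℕ))
    (fun j j' hle hj => lt_of_le_of_lt (Fin.le_def.mp (T.rowWeak i j' j hle)) hj) j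

lemma rho_le_lam (m : Fin (n+1)) (i : Fin n) : rhoOf T m i ≤ lam i := by
  have := Finset.card_filter_le (Finset.univ : Finset (Fin (lam i)))
    (fun j => (T.entry i j : ℕ) < (m:ℕ))
  simpa [rhoOf] using this

lemma rho_isFlag (hlam : Antitone lam) : IsFlag n lam (rhoOf T) := by
  refine ⟨fun i => ?_, fun i => ?_, fun m i => ?_, fun m i h => ?_⟩
  · unfold rhoOf
    rw [Finset.card_eq_zero, Finset.filter_eq_empty_iff]
    intro j _
    simp
  · unfold rhoOf
    rw [Finset.filter_true_of_mem (fun j _ => by simpa using (T.entry i j).isLt)]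
    simp
  · refine Finset.card_le_card ?_
    intro j hj
    simp only [Finset.mem_filter, Finset.mem_univ, true_and, Fin.coe_castSucc,
      Fin.val_succ] at hj ⊢
    omega
  · -- strip condition
    have hi1 : (i:ℕ) + 1 < n := h
    set i1 : Fin n := ⟨(i:ℕ)+1, h⟩ with hi1def
    have hi1val : (i1:ℕ) = (i:ℕ)+1 := rfl
    rcases Nat.eq_zero_or_pos (rhoOf T m.succ i1) with h0 | h0
    · omega
    have hle : rhoOf T m.succ i1 ≤ lam i1 := rho_le_lam T _ _
    have hc1 : rhoOf T m.succ i1 - 1 < lam i1 := by omega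
    set j' : Fin (lam i1) := ⟨rhoOf T m.succ i1 - 1, hc1⟩ with hj'def
    have hj'val : (j' : ℕ) = rhoOf T m.succ i1 - 1 := rfl
    have hj'lt : (j' : ℕ) < rhoOf T m.succ i1 := by omega
    have hentry : (T.entry i1 j' : ℕ) < (m:ℕ) + 1 := by
      have := (rho_char T m.succ i1 j').mpr hj'lt
      simpa using this
    have hji : (j' : ℕ) < lam i := by
      have hlam' : lam i1 ≤ lam i := hlam (Fin.le_def.mpr (by omega))
      omega
    have hcol := T.colStrict i i1 (Fin.lt_def.mpr (by omega)) j' hji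
    have hcol' : (T.entry i ⟨(j':ℕ), hji⟩ : ℕ) < (m:ℕ) := by
      have h1 := Fin.lt_def.mp hcol
      omega
    have hfin := (rho_char T m.castSucc i ⟨(j':ℕ), hji⟩).mp
      (by simpa using hcol')
    have e1 : ((⟨(j':ℕ), hji⟩ : Fin (lam i)) : ℕ) = (j' : ℕ) := rfl
    have e2 : (j' : ℕ) = rhoOf T m.succ i1 - 1 := rfl
    have e3 : ((⟨rhoOf T m.succ i1 - 1, hc1⟩ : Fin (lam i1)) : ℕ)
      = rhoOf T m.succ i1 - 1 := rfl
    omega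

lemma weight_eq_flagWeight {R : Type*} [CommRing R] (x : Fin n → R) (a : ℤ → R) :
    (∏ i : Fin n, ∏ j : Fin (lam i),
      (x (T.entry i j) - a ((T.entry i j : ℤ) + 1 + (j : ℤ) - (i : ℤ))))
    = flagWeight n x a (rhoOf T) := by
  classical
  unfold flagWeight
  rw [Finset.prod_comm]
  refine Finset.prod_congr rfl (fun i _ => ?_)
  rw [← Finset.prod_fiberwise (Finset.univ : Finset (Fin (lam i))) (fun j => T.entry i j)
    (fun j => (x (T.entry i j) - a ((T.entry i j : ℤ) + 1 + (j : ℤ) - (i : ℤ))))]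
  refine Finset.prod_congr rfl (fun m _ => ?_)
  have himg : Finset.image (fun j : Fin (lam i) => (j : ℕ))
      (Finset.univ.filter fun j => T.entry i j = m)
      = Finset.Ico (rhoOf T m.castSucc i) (rhoOf T m.succ i) := by
    ext v
    simp only [Finset.mem_image, Finset.mem_filter, Finset.mem_univ, true_and,
      Finset.mem_Ico]
    constructor
    · rintro ⟨j, hj, rfl⟩
      subst hj
      constructor
      · by_contra hlt
        push_neg at hlt
        have := (rho_char T (Fin.castSucc (T.entry i j)) i j).mpr hlt
        simp at this
      · refine (rho_char T (Fin.succ (T.entry i j)) i j).mp ?_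
        simp
    · rintro ⟨h1, h2⟩
      have hv : v < lam i := lt_of_lt_of_le h2 (rho_le_lam T _ _)
      refine ⟨⟨v, hv⟩, ?_, rfl⟩
      have hvv : ((⟨v, hv⟩ : Fin (lam i)) : ℕ) = v := rfl
      have hu : (T.entry i ⟨v, hv⟩ : ℕ) < (m.succ : ℕ) := (rho_char T m.succ i ⟨v, hv⟩).mpr
        (by omega)
      have hl : ¬ ((T.entry i ⟨v, hv⟩ : ℕ) < (m.castSucc : ℕ)) := by
        intro hcon
        have := (rho_char T m.castSucc i ⟨v, hv⟩).mp hcon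
        omega
      apply Fin.ext
      simp only [Fin.val_succ] at hu
      simp only [Fin.coe_castSucc] at hl
      omega
  rw [← himg, Finset.prod_image (by intro u _ v _ h; exact Fin.val_injective h)]
  refine Finset.prod_congr rfl (fun j hj => ?_)
  have : T.entry i j = m := (Finset.mem_filter.mp hj).2
  rw [this]

/-! ### from flags to SSYT -/

def entryOf (ρ : Fin (n+1) → Fin n → ℕ) (i : Fin n) (j : Fin (lam i)) : ℕ :=
  ((Finset.univ : Finset (Fin n)).filter fun m : Fin n => ρ m.succ i ≤ (j:ℕ)).card

section TofFlag

variable {ρ : Fin (n+1) → Fin n → ℕ}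

lemma entry_char (hρ : IsFlag n lam ρ) (i : Fin n) (j : Fin (lam i)) (m : Fin n) :
    ρ m.succ i ≤ (j:ℕ) ↔ (m:ℕ) < entryOf ρ i j := by
  unfold entryOf
  exact downward_iff (fun m : Fin n => ρ m.succ i ≤ (j:ℕ))
    (fun m m' hle hm => le_trans (hρ.mono' (Fin.succ_le_succ_iff.mpr hle) i) hm) m

lemma entryOf_lt (hρ : IsFlag n lam ρ) (i : Fin n) (j : Fin (lam i)) : entryOf ρ i j < n := by
  have hn : 0 < n := i.pos
  by_contra hge
  have : ρ (Fin.last n) i ≤ (j:ℕ) := by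
    have hlast : (⟨n-1, by omega⟩ : Fin n).succ = Fin.last n := by
      apply Fin.ext; simp [Fin.val_succ]; omega
    rw [← hlast]
    exact (entry_char hρ i j ⟨n-1, by omega⟩).mpr (by omega)
  rw [hρ.2.1 i] at this
  omega

lemma entryOf_lower (hρ : IsFlag n lam ρ) (i : Fin n) (j : Fin (lam i)) :
    ρ ⟨entryOf ρ i j, by exact lt_trans (entryOf_lt hρ i j) (by omega)⟩ i ≤ (j:ℕ) := by
  rcases Nat.eq_zero_or_pos (entryOf ρ i j) with h0 | h0
  · rw [show (⟨entryOf ρ i j, _⟩ : Fin (n+1)) = 0 by apply Fin.ext; simpa using h0]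
    rw [hρ.1 i]
    omega
  · have hm : entryOf ρ i j - 1 < n := by have := entryOf_lt hρ i j; omega
    have := (entry_char hρ i j ⟨entryOf ρ i j - 1, hm⟩).mpr (by simp; omega)
    have hsucc : (⟨entryOf ρ i j - 1, hm⟩ : Fin n).succ
        = ⟨entryOf ρ i j, by exact lt_trans (entryOf_lt hρ i j) (by omega)⟩ := by
      apply Fin.ext; simp [Fin.val_succ]; omega
    rwa [hsucc] at this

lemma entryOf_upper (hρ : IsFlag n lam ρ) (i : Fin n) (j : Fin (lam i)) :
    (j:ℕ) < ρ ⟨entryOf ρ i j + 1, by exact Nat.succ_lt_succ (entryOf_lt hρ i j)⟩ i := by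
  by_contra hle
  push_neg at hle
  have := (entry_char hρ i j ⟨entryOf ρ i j, entryOf_lt hρ i j⟩).mp (by
    have hsucc : (⟨entryOf ρ i j, entryOf_lt hρ i j⟩ : Fin n).succ
        = ⟨entryOf ρ i j + 1, Nat.succ_lt_succ (entryOf_lt hρ i j)⟩ := by
      apply Fin.ext; simp [Fin.val_succ]
    rw [hsucc]; exact hle)
  simp at this

lemma entryOf_colStrict (hρ : IsFlag n lam ρ) (hlam : Antitone lam) :
    ∀ (v : ℕ) (hv : v < n) (i : Fin n), (i:ℕ) < v → ∀ (jv : ℕ) (hj' : jv < lam ⟨v, hv⟩)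
      (hj : jv < lam i), entryOf ρ i ⟨jv, hj⟩ < entryOf ρ ⟨v, hv⟩ ⟨jv, hj'⟩ := by
  intro v
  induction v with
  | zero => intro hv i hi; omega
  | succ v ih =>
    intro hv i hi jv hj' hj
    have hvn : v < n := by omega
    have hadj : ∀ (jw : ℕ) (hw' : jw < lam ⟨v+1, hv⟩) (hw : jw < lam ⟨v, hvn⟩),
        entryOf ρ ⟨v, hvn⟩ ⟨jw, hw⟩ < entryOf ρ ⟨v+1, hv⟩ ⟨jw, hw'⟩ := by
      intro jw hw' hw
      by_contra hge
      push_neg at hge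
      have ht'n : entryOf ρ ⟨v+1, hv⟩ ⟨jw, hw'⟩ < n := entryOf_lt hρ _ _
      have htn : entryOf ρ ⟨v, hvn⟩ ⟨jw, hw⟩ < n := entryOf_lt hρ _ _
      have pf1 : entryOf ρ ⟨v+1, hv⟩ ⟨jw, hw'⟩ + 1 < n + 1 := by omega
      have pf2 : entryOf ρ ⟨v+1, hv⟩ ⟨jw, hw'⟩ < n + 1 := by omega
      have pf3 : entryOf ρ ⟨v, hvn⟩ ⟨jw, hw⟩ < n + 1 := by omega
      have hup' : (jw:ℕ) < ρ ⟨entryOf ρ ⟨v+1, hv⟩ ⟨jw, hw'⟩ + 1, pf1⟩ ⟨v+1, hv⟩ :=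
        entryOf_upper hρ ⟨v+1, hv⟩ ⟨jw, hw'⟩
      have hC4' : ρ ⟨entryOf ρ ⟨v+1, hv⟩ ⟨jw, hw'⟩ + 1, pf1⟩ ⟨v+1, hv⟩
          ≤ ρ ⟨entryOf ρ ⟨v+1, hv⟩ ⟨jw, hw'⟩, pf2⟩ ⟨v, hvn⟩ :=
        hρ.2.2.2 ⟨entryOf ρ ⟨v+1, hv⟩ ⟨jw, hw'⟩, ht'n⟩ ⟨v, hvn⟩ (by simpa using hv)
      have hmono' : ρ ⟨entryOf ρ ⟨v+1, hv⟩ ⟨jw, hw'⟩, pf2⟩ ⟨v, hvn⟩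
          ≤ ρ ⟨entryOf ρ ⟨v, hvn⟩ ⟨jw, hw⟩, pf3⟩ ⟨v, hvn⟩ :=
        hρ.mono (by omega) (by omega) hge ⟨v, hvn⟩
      have hlow' : ρ ⟨entryOf ρ ⟨v, hvn⟩ ⟨jw, hw⟩, pf3⟩ ⟨v, hvn⟩ ≤ jw :=
        entryOf_lower hρ ⟨v, hvn⟩ ⟨jw, hw⟩
      omega
    rcases Nat.lt_or_ge (i:ℕ) v with hlt | hge
    · have hjv : jv < lam ⟨v, hvn⟩ := lt_of_lt_of_le hj' (hlam (Fin.le_def.mpr (by simp)))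
      exact lt_trans (ih hvn i hlt jv hjv hj) (hadj jv hj' hjv)
    · have hieq : (i:ℕ) = v := by omega
      have hieq2 : i = ⟨v, hvn⟩ := by apply Fin.ext; simpa using hieq
      subst hieq2
      exact hadj jv hj' hj

noncomputable def TofFlag (ρ : Fin (n+1) → Fin n → ℕ) (hρ : IsFlag n lam ρ)
    (hlam : Antitone lam) : SSYT n lam where
  entry i j := ⟨entryOf ρ i j, entryOf_lt hρ i j⟩
  rowWeak i j k hjk := by
    apply Fin.mk_le_mk.mpr
    exact Finset.card_le_card (fun m hm => by
      simp only [Finset.mem_filter, Finset.mem_univ, true_and] at hm ⊢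
      exact le_trans hm (Fin.le_def.mp hjk))
  colStrict i i' hii' j hj := by
    apply Fin.mk_lt_mk.mpr
    exact entryOf_colStrict hρ hlam (i':ℕ) i'.isLt i (Fin.lt_def.mp hii') (j:ℕ) j.isLt hj

end TofFlag

section Inverses

variable {ρ : Fin (n+1) → Fin n → ℕ}

lemma rho_TofFlag (hρ : IsFlag n lam ρ) (hlam : Antitone lam) :
    rhoOf (TofFlag ρ hρ hlam) = ρ := by
  funext m i
  unfold rhoOf
  have hent : ∀ j : Fin (lam i), ((TofFlag ρ hρ hlam).entry i j : ℕ) = entryOf ρ i j :=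
    fun j => rfl
  have hiff : ∀ j : Fin (lam i), (((TofFlag ρ hρ hlam).entry i j : ℕ) < (m:ℕ))
      ↔ ((j:ℕ) < ρ m i) := by
    intro j
    rw [hent j]
    constructor
    · intro hlt
      have pf1 : entryOf ρ i j + 1 < n + 1 := Nat.succ_lt_succ (entryOf_lt hρ i j)
      have h1 : (j:ℕ) < ρ ⟨entryOf ρ i j + 1, pf1⟩ i := entryOf_upper hρ i j
      have h2 : ρ ⟨entryOf ρ i j + 1, pf1⟩ i ≤ ρ m i := by
        have := hρ.mono (u := entryOf ρ i j + 1) (v := (m:ℕ)) (by omega)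
          (by omega) (by omega) i
        exact this
      omega
    · intro hlt
      by_contra hge
      push_neg at hge
      have pf2 : entryOf ρ i j < n + 1 := by have := entryOf_lt hρ i j; omega
      have h1 : ρ ⟨entryOf ρ i j, pf2⟩ i ≤ (j:ℕ) := entryOf_lower hρ i j
      have h2 : ρ m i ≤ ρ ⟨entryOf ρ i j, pf2⟩ i := by
        have := hρ.mono (u := (m:ℕ)) (v := entryOf ρ i j) (by omega) (by omega) hge i
        exact this
      omega
  rw [Finset.filter_congr (fun j _ => hiff j)]
  exact card_filter_val_lt (ρ m i) (hρ.le_lam m i)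

lemma TofFlag_rho (T : SSYT n lam) (hlam : Antitone lam) :
    TofFlag (rhoOf T) (rho_isFlag T hlam) hlam = T := by
  have hinj : ∀ (A B : SSYT n lam), A.entry = B.entry → A = B := by
    intro A B h; cases A; cases B; simpa using h
  apply hinj
  funext i j
  apply Fin.ext
  show entryOf (rhoOf T) i j = (T.entry i j : ℕ)
  unfold entryOf
  have hiff : ∀ m : Fin n, (rhoOf T m.succ i ≤ (j:ℕ)) ↔ ((m:ℕ) < (T.entry i j : ℕ)) := by
    intro m
    have hchar := rho_char T m.succ i j
    simp only [Fin.val_succ] at hchar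
    constructor
    · intro hle
      by_contra hge
      push_neg at hge
      have : (T.entry i j : ℕ) < (m:ℕ) + 1 := by omega
      have := hchar.mp this
      omega
    · intro hlt
      by_contra hgt
      push_neg at hgt
      have := hchar.mpr hgt
      omega
  rw [Finset.filter_congr (fun m _ => hiff m)]
  exact card_filter_val_lt _ (le_of_lt (T.entry i j).isLt)

end Inverses

lemma facSchur_eq_flagSum {R : Type*} [CommRing R] (hlam : Antitone lam)
    (x : Fin n → R) (a : ℤ → R) :
    facSchur n lam x a = ∑ ρ ∈ (flagFinset (n:=n) (lam:=lam)), flagWeight n x a ρ := by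
  rw [facSchur]
  exact Finset.sum_bij' (fun T _ => rhoOf T)
    (fun ρ hρ => TofFlag ρ (mem_flagFinset.mp hρ) hlam)
    (fun T _ => mem_flagFinset.mpr (rho_isFlag T hlam))
    (fun ρ hρ => Finset.mem_univ _)
    (fun T _ => TofFlag_rho T hlam)
    (fun ρ hρ => rho_TofFlag (mem_flagFinset.mp hρ) hlam)
    (fun T _ => weight_eq_flagWeight T x a)

/-! ### swapping two adjacent variables -/

section Swap

variable (k : ℕ) (hk : k + 1 < n)

def loF : Fin (n+1) := ⟨k, by omega⟩
def midF : Fin (n+1) := ⟨k+1, by omega⟩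
def hiF : Fin (n+1) := ⟨k+2, by omega⟩
def KF : Fin n := ⟨k, by omega⟩
def K1F : Fin n := ⟨k+1, hk⟩

variable (d : Fin (n+1) → Fin n → ℕ)

def mloD (i : Fin n) : ℕ :=
  if h : (i:ℕ)+1 < n then max (d (loF k hk) i) (d (hiF k hk) ⟨(i:ℕ)+1, h⟩)
  else d (loF k hk) i

def mhiD (i : Fin n) : ℕ :=
  if h : 0 < (i:ℕ) then min (d (hiF k hk) i) (d (loF k hk) ⟨(i:ℕ)-1, by omega⟩)
  else d (hiF k hk) i

lemma loF_le_mloD (i : Fin n) : d (loF k hk) i ≤ mloD k hk d i := by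
  unfold mloD; split
  · exact le_max_left _ _
  · exact le_refl _

lemma mhiD_le_hiF (i : Fin n) : mhiD k hk d i ≤ d (hiF k hk) i := by
  unfold mhiD; split
  · exact min_le_left _ _
  · exact le_refl _

variable {R : Type*} [CommRing R] (a : ℤ → R)

def rowX (z : R) (i : Fin n) : R :=
  ∏ j ∈ Finset.Ico (d (loF k hk) i) (mloD k hk d i), (z - a (((k:ℤ)+1-(i:ℤ)) + j))

def rowY (z : R) (i : Fin n) : R :=
  ∏ j ∈ Finset.Ico (mhiD k hk d i) (d (hiF k hk) i), (z - a (((k:ℤ)+1-(i:ℤ)) + j + 1))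

def rowSum (u v : R) (i : Fin n) : R :=
  ∑ e ∈ Finset.Icc (mloD k hk d i) (mhiD k hk d i),
    (∏ j ∈ Finset.Ico (d (loF k hk) i) e, (u - a (((k:ℤ)+1-(i:ℤ)) + j))) *
    (∏ j ∈ Finset.Ico e (d (hiF k hk) i), (v - a (((k:ℤ)+1-(i:ℤ)) + j + 1)))

lemma rowSum_eq (u v : R) (i : Fin n) :
    rowSum k hk d a u v i = rowX k hk d a u i * rowY k hk d a v i *
      Hsum a ((k:ℤ)+1-(i:ℤ)) (mloD k hk d i) (mhiD k hk d i) u v := by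
  unfold rowSum rowX rowY
  exact Hsum_trunc a _ _ _ _ _ u v (loF_le_mloD k hk d i) (mhiD_le_hiF k hk d i)

lemma rowX_eq_rowY_succ (z : R) (v : ℕ) (hv : v < n) (hv1 : v + 1 < n) :
    rowX k hk d a z ⟨v, hv⟩ = rowY k hk d a z ⟨v+1, hv1⟩ := by
  have hmlo : mloD k hk d ⟨v, hv⟩
      = max (d (loF k hk) ⟨v, hv⟩) (d (hiF k hk) ⟨v+1, hv1⟩) := by
    unfold mloD
    rw [dif_pos (show ((⟨v,hv⟩ : Fin n) : ℕ) + 1 < n from hv1)]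
  have hmhi : mhiD k hk d ⟨v+1, hv1⟩
      = min (d (hiF k hk) ⟨v+1, hv1⟩) (d (loF k hk) ⟨v, hv⟩) := by
    unfold mhiD
    rw [dif_pos (show 0 < ((⟨v+1,hv1⟩ : Fin n) : ℕ) from Nat.succ_pos v)]
    rfl
  have hset : Finset.Ico (d (loF k hk) ⟨v, hv⟩)
        (max (d (loF k hk) ⟨v, hv⟩) (d (hiF k hk) ⟨v+1, hv1⟩))
      = Finset.Ico (min (d (hiF k hk) ⟨v+1, hv1⟩) (d (loF k hk) ⟨v, hv⟩))
        (d (hiF k hk) ⟨v+1, hv1⟩) := by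
    ext j; simp only [Finset.mem_Ico]; omega
  unfold rowX rowY
  rw [hmlo, hmhi, hset]
  refine Finset.prod_congr rfl (fun j _ => ?_)
  congr 1
  push_cast
  ring

lemma rowX_last (z : R) (v : ℕ) (hv : v < n) (hv1 : ¬ (v + 1 < n)) :
    rowX k hk d a z ⟨v, hv⟩ = 1 := by
  have hmlo : mloD k hk d ⟨v, hv⟩ = d (loF k hk) ⟨v, hv⟩ := by
    unfold mloD
    rw [dif_neg (show ¬ (((⟨v,hv⟩ : Fin n) : ℕ) + 1 < n) from hv1)]
  unfold rowX
  rw [hmlo]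
  simp

lemma rowY_zero (z : R) (hv : 0 < n) :
    rowY k hk d a z ⟨0, hv⟩ = 1 := by
  have hmhi : mhiD k hk d ⟨0, hv⟩ = d (hiF k hk) ⟨0, hv⟩ := by
    unfold mhiD
    rw [dif_neg (by simp)]
  unfold rowY
  rw [hmhi]
  simp

lemma prod_rowX_eq_prod_rowY (z : R) :
    ∏ i : Fin n, rowX k hk d a z i = ∏ i : Fin n, rowY k hk d a z i := by
  classical
  have hn : 0 < n := by omega
  set X' : ℕ → R := fun v => if h : v < n then rowX k hk d a z ⟨v, h⟩ else 1 with hX'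
  set Y' : ℕ → R := fun v => if h : v < n then rowY k hk d a z ⟨v, h⟩ else 1 with hY'
  have hXY : ∀ v, X' v = Y' (v+1) := by
    intro v
    by_cases h1 : v + 1 < n
    · rw [hX', hY']
      simp only
      rw [dif_pos (by omega : v < n), dif_pos h1]
      exact rowX_eq_rowY_succ k hk d a z v (by omega) h1
    · by_cases h0 : v < n
      · rw [hX', hY']
        simp only
        rw [dif_pos h0, dif_neg h1]
        exact rowX_last k hk d a z v h0 h1
      · rw [hX', hY']
        simp only
        rw [dif_neg h0, dif_neg (by omega)]
  have hY0 : Y' 0 = 1 := by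
    rw [hY']
    simp only
    rw [dif_pos hn]
    exact rowY_zero k hk d a z hn
  have hXprod : ∏ i : Fin n, rowX k hk d a z i = ∏ v ∈ Finset.range n, X' v := by
    rw [← Fin.prod_univ_eq_prod_range X' n]
    refine Finset.prod_congr rfl (fun i _ => ?_)
    rw [hX']
    simp only
    rw [dif_pos i.isLt]
  have hYprod : ∏ i : Fin n, rowY k hk d a z i = ∏ v ∈ Finset.range n, Y' v := by
    rw [← Fin.prod_univ_eq_prod_range Y' n]
    refine Finset.prod_congr rfl (fun i _ => ?_)
    rw [hY']
    simp only
    rw [dif_pos i.isLt]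
  rw [hXprod, hYprod]
  obtain ⟨n', rfl⟩ : ∃ n', n = n' + 1 := ⟨n - 1, by omega⟩
  rw [Finset.prod_congr rfl (fun v (_ : v ∈ Finset.range (n'+1)) => hXY v)]
  rw [Finset.prod_range_succ, Finset.prod_range_succ']
  rw [hY0, show Y' (n'+1) = 1 by rw [hY']; simp only; rw [dif_neg (by omega)]]

/-! ### level weights and factorization -/

def levelW {R : Type*} [CommRing R] (y : Fin n → R) (a : ℤ → R)
    (ρ : Fin (n+1) → Fin n → ℕ) (m : Fin n) : R :=
  ∏ i : Fin n, ∏ j ∈ Finset.Ico (ρ m.castSucc i) (ρ m.succ i),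
    (y m - a ((m:ℤ) + 1 + (j:ℤ) - (i:ℤ)))

lemma lo_ne_mid : loF k hk ≠ midF k hk := Fin.ne_of_val_ne (show k ≠ k+1 by omega)

lemma hi_ne_mid : hiF k hk ≠ midF k hk := Fin.ne_of_val_ne (show k+2 ≠ k+1 by omega)

lemma zero_ne_mid : (0 : Fin (n+1)) ≠ midF k hk := by
  have : ((0 : Fin (n+1)) : ℕ) = 0 := rfl
  exact Fin.ne_of_val_ne (show (0 : Fin (n+1)).val ≠ k+1 by omega)

lemma last_ne_mid : Fin.last n ≠ midF k hk := by
  refine Fin.ne_of_val_ne ?_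
  show n ≠ k + 1
  omega

lemma K1F_ne_KF : K1F k hk ≠ KF k hk := Fin.ne_of_val_ne (show k+1 ≠ k by omega)

lemma castSucc_ne_mid {m : Fin n} (hm : m ≠ K1F k hk) : m.castSucc ≠ midF k hk := by
  intro h
  apply hm
  apply Fin.ext
  have h2 := congrArg Fin.val h
  simp only [Fin.coe_castSucc] at h2
  show (m:ℕ) = k+1
  exact h2

lemma succ_ne_mid {m : Fin n} (hm : m ≠ KF k hk) : m.succ ≠ midF k hk := by
  intro h
  apply hm
  apply Fin.ext
  have h2 := congrArg Fin.val h
  simp only [Fin.val_succ] at h2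
  have h3 : (m:ℕ) + 1 = k + 1 := h2
  show (m:ℕ) = k
  omega

def CoutD {R : Type*} [CommRing R] (y : Fin n → R) (a : ℤ → R) : R :=
  ∏ m ∈ (Finset.univ.erase (KF k hk)).erase (K1F k hk), levelW y a d m

lemma update_factor {R : Type*} [CommRing R] (y : Fin n → R) (a : ℤ → R) (κ : Fin n → ℕ) :
    flagWeight n y a (Function.update d (midF k hk) κ)
    = CoutD k hk d y a * ∏ i : Fin n,
        ((∏ j ∈ Finset.Ico (d (loF k hk) i) (κ i),
            (y (KF k hk) - a (((k:ℤ)+1-(i:ℤ)) + j))) *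
         (∏ j ∈ Finset.Ico (κ i) (d (hiF k hk) i),
            (y (K1F k hk) - a (((k:ℤ)+1-(i:ℤ)) + j + 1)))) := by
  classical
  have hWK : levelW y a (Function.update d (midF k hk) κ) (KF k hk)
      = ∏ i : Fin n, ∏ j ∈ Finset.Ico (d (loF k hk) i) (κ i),
          (y (KF k hk) - a (((k:ℤ)+1-(i:ℤ)) + j)) := by
    unfold levelW
    refine Finset.prod_congr rfl (fun i _ => ?_)
    have h1 : (Function.update d (midF k hk) κ) ((KF k hk).castSucc) i
        = d (loF k hk) i := by
      rw [show (KF k hk).castSucc = loF k hk from rfl,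
        Function.update_of_ne (lo_ne_mid k hk)]
    have h2 : (Function.update d (midF k hk) κ) ((KF k hk).succ) i = κ i := by
      rw [show (KF k hk).succ = midF k hk from rfl, Function.update_self]
    rw [h1, h2]
    refine Finset.prod_congr rfl (fun j _ => ?_)
    congr 2
    have hval : ((KF k hk : ℕ) : ℤ) = (k:ℤ) := rfl
    rw [hval]
    ring
  have hWK1 : levelW y a (Function.update d (midF k hk) κ) (K1F k hk)
      = ∏ i : Fin n, ∏ j ∈ Finset.Ico (κ i) (d (hiF k hk) i),
          (y (K1F k hk) - a (((k:ℤ)+1-(i:ℤ)) + j + 1)) := by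
    unfold levelW
    refine Finset.prod_congr rfl (fun i _ => ?_)
    have h1 : (Function.update d (midF k hk) κ) ((K1F k hk).castSucc) i = κ i := by
      rw [show (K1F k hk).castSucc = midF k hk from rfl, Function.update_self]
    have h2 : (Function.update d (midF k hk) κ) ((K1F k hk).succ) i
        = d (hiF k hk) i := by
      rw [show (K1F k hk).succ = hiF k hk from rfl,
        Function.update_of_ne (hi_ne_mid k hk)]
    rw [h1, h2]
    refine Finset.prod_congr rfl (fun j _ => ?_)
    congr 2
    have hval : ((K1F k hk : ℕ) : ℤ) = ((k:ℤ)+1) := by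
      show (((k+1 : ℕ)) : ℤ) = (k:ℤ)+1
      push_cast; ring
    rw [hval]
    ring
  have hrest : ∀ m ∈ (Finset.univ.erase (KF k hk)).erase (K1F k hk),
      levelW y a (Function.update d (midF k hk) κ) m = levelW y a d m := by
    intro m hm
    have hm1 : m ≠ K1F k hk := (Finset.mem_erase.mp hm).1
    have hm2 : m ≠ KF k hk := (Finset.mem_erase.mp (Finset.mem_erase.mp hm).2).1
    unfold levelW
    refine Finset.prod_congr rfl (fun i _ => ?_)
    rw [Function.update_of_ne (castSucc_ne_mid k hk hm1),
      Function.update_of_ne (succ_ne_mid k hk hm2)]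
  have hsplit : flagWeight n y a (Function.update d (midF k hk) κ)
      = levelW y a (Function.update d (midF k hk) κ) (KF k hk)
        * (levelW y a (Function.update d (midF k hk) κ) (K1F k hk)
          * ∏ m ∈ (Finset.univ.erase (KF k hk)).erase (K1F k hk),
              levelW y a (Function.update d (midF k hk) κ) m) := by
    rw [show flagWeight n y a (Function.update d (midF k hk) κ)
      = ∏ m : Fin n, levelW y a (Function.update d (midF k hk) κ) m from rfl]
    rw [← Finset.mul_prod_erase Finset.univ _ (Finset.mem_univ (KF k hk))]
    rw [← Finset.mul_prod_erase _ _
      (Finset.mem_erase.mpr ⟨K1F_ne_KF k hk, Finset.mem_univ _⟩)]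
  rw [hsplit, hWK, hWK1, Finset.prod_congr rfl hrest, Finset.prod_mul_distrib]
  unfold CoutD
  ring

/-! ### the fiber decomposition -/

def forgetF (ρ : Fin (n+1) → Fin n → ℕ) : Fin (n+1) → Fin n → ℕ :=
  Function.update ρ (midF k hk) (fun _ => 0)

lemma fiber_sum {R : Type*} [CommRing R]
    (hd : d ∈ Finset.image (forgetF k hk) (flagFinset (n:=n) (lam:=lam)))
    (y : Fin n → R) (a : ℤ → R) :
    ∑ ρ ∈ (flagFinset (n:=n) (lam:=lam)).filter (fun ρ => forgetF k hk ρ = d),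
      flagWeight n y a ρ
    = ∑ κ ∈ Fintype.piFinset (fun i => Finset.Icc (mloD k hk d i) (mhiD k hk d i)),
        flagWeight n y a (Function.update d (midF k hk) κ) := by
  classical
  obtain ⟨ρ0, hρ0mem, hρ0eq⟩ := Finset.mem_image.mp hd
  have hflag0 := mem_flagFinset.mp hρ0mem
  have hdmid : d (midF k hk) = fun _ => 0 := by
    rw [← hρ0eq]; unfold forgetF; rw [Function.update_self]
  have hdother : ∀ m, m ≠ midF k hk → d m = ρ0 m := by
    intro m hm
    rw [← hρ0eq]; unfold forgetF; rw [Function.update_of_ne hm]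
  have hleft : ∀ ρ ∈ (flagFinset (n:=n) (lam:=lam)).filter (fun ρ => forgetF k hk ρ = d),
      Function.update d (midF k hk) (fun i => ρ (midF k hk) i) = ρ := by
    intro ρ hρ
    have hfor := (Finset.mem_filter.mp hρ).2
    funext m'
    rcases eq_or_ne m' (midF k hk) with rfl | hne
    · rw [Function.update_self]
    · rw [Function.update_of_ne hne, ← hfor]
      unfold forgetF
      rw [Function.update_of_ne hne]
  refine Finset.sum_bij' (fun ρ _ => fun i => ρ (midF k hk) i)
    (fun κ _ => Function.update d (midF k hk) κ) ?_ ?_ hleft ?_ ?_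
  · -- maps to piFinset
    intro ρ hρ
    have hflag := mem_flagFinset.mp (Finset.mem_filter.mp hρ).1
    have hfor := (Finset.mem_filter.mp hρ).2
    have hρother : ∀ m, m ≠ midF k hk → ρ m = d m := by
      intro m hm
      rw [← hfor]; unfold forgetF; rw [Function.update_of_ne hm]
    beta_reduce
    rw [Fintype.mem_piFinset]
    intro i
    rw [Finset.mem_Icc]
    have hc3K : ρ (loF k hk) i ≤ ρ (midF k hk) i := hflag.2.2.1 (KF k hk) i
    have hc3K1 : ρ (midF k hk) i ≤ ρ (hiF k hk) i := hflag.2.2.1 (K1F k hk) i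
    constructor
    · unfold mloD
      split
      · next h =>
        refine max_le ?_ ?_
        · rw [← hρother (loF k hk) (lo_ne_mid k hk)]
          exact hc3K
        · rw [← hρother (hiF k hk) (hi_ne_mid k hk)]
          exact hflag.2.2.2 (K1F k hk) i h
      · rw [← hρother (loF k hk) (lo_ne_mid k hk)]
        exact hc3K
    · unfold mhiD
      split
      · next h =>
        refine le_min ?_ ?_
        · rw [← hρother (hiF k hk) (hi_ne_mid k hk)]
          exact hc3K1
        · rw [← hρother (loF k hk) (lo_ne_mid k hk)]
          have pfi : (i:ℕ) - 1 < n := by omega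
          have pfh : ((⟨(i:ℕ)-1, pfi⟩ : Fin n) : ℕ) + 1 < n :=
            show (i:ℕ)-1+1 < n by omega
          have hstep := hflag.2.2.2 (KF k hk) ⟨(i:ℕ)-1, pfi⟩ pfh
          have hidx : (⟨((⟨(i:ℕ)-1, pfi⟩ : Fin n) : ℕ) + 1, pfh⟩ : Fin n) = i := by
            apply Fin.ext
            show (i:ℕ)-1+1 = (i:ℕ)
            omega
          rw [hidx] at hstep
          exact hstep
      · rw [← hρother (hiF k hk) (hi_ne_mid k hk)]
        exact hc3K1
  · -- maps back to the fiber
    intro κ hκ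
    rw [Fintype.mem_piFinset] at hκ
    have hbounds : ∀ i, mloD k hk d i ≤ κ i ∧ κ i ≤ mhiD k hk d i := by
      intro i
      have := hκ i
      rw [Finset.mem_Icc] at this
      exact this
    beta_reduce
    rw [Finset.mem_filter]
    constructor
    · rw [mem_flagFinset]
      refine ⟨fun i => ?_, fun i => ?_, fun m i => ?_, fun m i h => ?_⟩
      · rw [Function.update_of_ne (zero_ne_mid k hk), hdother 0 (zero_ne_mid k hk)]
        exact hflag0.1 i
      · rw [Function.update_of_ne (last_ne_mid k hk), hdother _ (last_ne_mid k hk)]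
        exact hflag0.2.1 i
      · -- C3
        rcases eq_or_ne m (KF k hk) with rfl | hmK
        · rw [show (KF k hk).castSucc = loF k hk from rfl,
            show (KF k hk).succ = midF k hk from rfl,
            Function.update_of_ne (lo_ne_mid k hk), Function.update_self]
          exact le_trans (loF_le_mloD k hk d i) (hbounds i).1
        rcases eq_or_ne m (K1F k hk) with rfl | hmK1
        · rw [show (K1F k hk).castSucc = midF k hk from rfl,
            show (K1F k hk).succ = hiF k hk from rfl,
            Function.update_of_ne (hi_ne_mid k hk), Function.update_self]
          exact le_trans (hbounds i).2 (mhiD_le_hiF k hk d i)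
        · rw [Function.update_of_ne (castSucc_ne_mid k hk hmK1),
            Function.update_of_ne (succ_ne_mid k hk hmK),
            hdother _ (castSucc_ne_mid k hk hmK1), hdother _ (succ_ne_mid k hk hmK)]
          exact hflag0.2.2.1 m i
      · -- C4
        rcases eq_or_ne m (KF k hk) with rfl | hmK
        · rw [show (KF k hk).succ = midF k hk from rfl,
            show (KF k hk).castSucc = loF k hk from rfl,
            Function.update_self, Function.update_of_ne (lo_ne_mid k hk)]
          refine le_trans (hbounds ⟨(i:ℕ)+1, h⟩).2 ?_
          have hmhi : mhiD k hk d ⟨(i:ℕ)+1, h⟩ ≤ d (loF k hk) i := by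
            unfold mhiD
            rw [dif_pos (show 0 < ((⟨(i:ℕ)+1, h⟩ : Fin n) : ℕ) from Nat.succ_pos _)]
            exact min_le_right _ _
          exact hmhi
        rcases eq_or_ne m (K1F k hk) with rfl | hmK1
        · rw [show (K1F k hk).succ = hiF k hk from rfl,
            show (K1F k hk).castSucc = midF k hk from rfl,
            Function.update_of_ne (hi_ne_mid k hk), Function.update_self]
          refine le_trans ?_ (hbounds i).1
          have hmlo : d (hiF k hk) ⟨(i:ℕ)+1, h⟩ ≤ mloD k hk d i := by
            unfold mloD
            rw [dif_pos (show ((i : Fin n):ℕ) + 1 < n from h)]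
            exact le_max_right _ _
          exact hmlo
        · rw [Function.update_of_ne (castSucc_ne_mid k hk hmK1),
            Function.update_of_ne (succ_ne_mid k hk hmK),
            hdother _ (castSucc_ne_mid k hk hmK1), hdother _ (succ_ne_mid k hk hmK)]
          exact hflag0.2.2.2 m i h
    · unfold forgetF
      rw [Function.update_idem, ← hdmid]
      exact Function.update_eq_self _ d
  · -- right inverse
    intro κ hκ
    beta_reduce
    funext i
    rw [Function.update_self]
  · -- weights
    intro ρ hρ
    beta_reduce
    rw [hleft ρ hρ]

lemma prod_rowSum_symm {R : Type*} [CommRing R] (a : ℤ → R) (u v : R) :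
    ∏ i : Fin n, rowSum k hk d a u v i = ∏ i : Fin n, rowSum k hk d a v u i := by
  rw [Finset.prod_congr rfl (fun (i : Fin n) (_ : i ∈ Finset.univ) => rowSum_eq k hk d a u v i),
    Finset.prod_congr rfl (fun (i : Fin n) (_ : i ∈ Finset.univ) => rowSum_eq k hk d a v u i),
    Finset.prod_mul_distrib, Finset.prod_mul_distrib,
    Finset.prod_mul_distrib, Finset.prod_mul_distrib]
  rw [Finset.prod_congr rfl (fun (i : Fin n) (_ : i ∈ Finset.univ) =>
    Hsum_symm a ((k:ℤ)+1-(i:ℤ)) (mloD k hk d i) (mhiD k hk d i) u v)]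
  rw [prod_rowX_eq_prod_rowY k hk d a u, ← prod_rowX_eq_prod_rowY k hk d a v]
  ring

lemma CoutD_swap {R : Type*} [CommRing R] (x : Fin n → R) (a : ℤ → R) :
    CoutD k hk d (x ∘ Equiv.swap (KF k hk) (K1F k hk)) a = CoutD k hk d x a := by
  unfold CoutD
  refine Finset.prod_congr rfl (fun m hm => ?_)
  have hm1 : m ≠ K1F k hk := (Finset.mem_erase.mp hm).1
  have hm2 : m ≠ KF k hk := (Finset.mem_erase.mp (Finset.mem_erase.mp hm).2).1
  unfold levelW
  refine Finset.prod_congr rfl (fun i _ => ?_)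
  refine Finset.prod_congr rfl (fun j _ => ?_)
  have : (x ∘ Equiv.swap (KF k hk) (K1F k hk)) m = x m := by
    show x (Equiv.swap (KF k hk) (K1F k hk) m) = x m
    rw [Equiv.swap_apply_of_ne_of_ne hm2 hm1]
  rw [this]

lemma flagSum_swap {R : Type*} [CommRing R] (x : Fin n → R) (a : ℤ → R) :
    ∑ ρ ∈ (flagFinset (n:=n) (lam:=lam)), flagWeight n x a ρ
    = ∑ ρ ∈ (flagFinset (n:=n) (lam:=lam)),
        flagWeight n (x ∘ Equiv.swap (KF k hk) (K1F k hk)) a ρ := by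
  classical
  rw [← Finset.sum_fiberwise_of_maps_to
    (t := Finset.image (forgetF k hk) (flagFinset (n:=n) (lam:=lam)))
    (fun ρ h => Finset.mem_image_of_mem (forgetF k hk) h) (flagWeight n x a)]
  rw [← Finset.sum_fiberwise_of_maps_to
    (t := Finset.image (forgetF k hk) (flagFinset (n:=n) (lam:=lam)))
    (fun ρ h => Finset.mem_image_of_mem (forgetF k hk) h)
    (flagWeight n (x ∘ Equiv.swap (KF k hk) (K1F k hk)) a)]
  refine Finset.sum_congr rfl (fun d hd => ?_)
  rw [fiber_sum k hk d hd x a, fiber_sum k hk d hd (x ∘ Equiv.swap (KF k hk) (K1F k hk)) a]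
  rw [Finset.sum_congr rfl (fun κ (_ : κ ∈ Fintype.piFinset
      (fun i : Fin n => Finset.Icc (mloD k hk d i) (mhiD k hk d i))) =>
        update_factor k hk d x a κ),
    Finset.sum_congr rfl (fun κ (_ : κ ∈ Fintype.piFinset
      (fun i : Fin n => Finset.Icc (mloD k hk d i) (mhiD k hk d i))) =>
        update_factor k hk d (x ∘ Equiv.swap (KF k hk) (K1F k hk)) a κ)]
  rw [← Finset.mul_sum, ← Finset.mul_sum]
  rw [CoutD_swap k hk d x a]
  congr 1
  have hswK : (x ∘ Equiv.swap (KF k hk) (K1F k hk)) (KF k hk) = x (K1F k hk) := by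
    show x (Equiv.swap (KF k hk) (K1F k hk) (KF k hk)) = _
    rw [Equiv.swap_apply_left]
  have hswK1 : (x ∘ Equiv.swap (KF k hk) (K1F k hk)) (K1F k hk) = x (KF k hk) := by
    show x (Equiv.swap (KF k hk) (K1F k hk) (K1F k hk)) = _
    rw [Equiv.swap_apply_right]
  rw [hswK, hswK1]
  have e1 := Finset.prod_univ_sum
    (fun i : Fin n => Finset.Icc (mloD k hk d i) (mhiD k hk d i))
    (fun i e => (∏ j ∈ Finset.Ico (d (loF k hk) i) e,
        (x (KF k hk) - a (((k:ℤ)+1-(i:ℤ)) + j))) *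
      (∏ j ∈ Finset.Ico e (d (hiF k hk) i),
        (x (K1F k hk) - a (((k:ℤ)+1-(i:ℤ)) + j + 1))))
  have e2 := Finset.prod_univ_sum
    (fun i : Fin n => Finset.Icc (mloD k hk d i) (mhiD k hk d i))
    (fun i e => (∏ j ∈ Finset.Ico (d (loF k hk) i) e,
        (x (K1F k hk) - a (((k:ℤ)+1-(i:ℤ)) + j))) *
      (∏ j ∈ Finset.Ico e (d (hiF k hk) i),
        (x (KF k hk) - a (((k:ℤ)+1-(i:ℤ)) + j + 1))))
  rw [← e1, ← e2]
  exact prod_rowSum_symm k hk d a (x (KF k hk)) (x (K1F k hk))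

end Swap

/-! ### full symmetry -/

section Symmetry

variable {R : Type*} [CommRing R]

lemma facSchur_swap_adj (hlam : Antitone lam) (a : ℤ → R) (u v : Fin n)
    (huv : (v:ℕ) = (u:ℕ) + 1) (x : Fin n → R) :
    facSchur n lam (x ∘ Equiv.swap u v) a = facSchur n lam x a := by
  have hk : (u:ℕ) + 1 < n := by have := v.isLt; omega
  have hu : u = KF (u:ℕ) hk := by apply Fin.ext; rfl
  have hv : v = K1F (u:ℕ) hk := by apply Fin.ext; exact huv
  rw [hu, hv, facSchur_eq_flagSum hlam _ a, facSchur_eq_flagSum hlam x a]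
  exact (flagSum_swap (lam := lam) (u:ℕ) hk x a).symm

lemma facSchur_swap_any (hlam : Antitone lam) (a : ℤ → R) :
    ∀ (u v : Fin n), u ≠ v → ∀ x : Fin n → R,
      facSchur n lam (x ∘ Equiv.swap u v) a = facSchur n lam x a := by
  suffices H : ∀ (dist : ℕ) (u v : Fin n), (v:ℕ) = (u:ℕ) + dist + 1 → ∀ x : Fin n → R,
      facSchur n lam (x ∘ Equiv.swap u v) a = facSchur n lam x a by
    intro u v huv x
    rcases lt_trichotomy ((u:ℕ)) ((v:ℕ)) with h | h | h
    · exact H ((v:ℕ) - (u:ℕ) - 1) u v (by omega) x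
    · exact absurd (Fin.ext h) huv
    · rw [Equiv.swap_comm]
      exact H ((u:ℕ) - (v:ℕ) - 1) v u (by omega) x
  intro dist
  induction dist with
  | zero =>
    intro u v huv x
    exact facSchur_swap_adj hlam a u v (by omega) x
  | succ e ih =>
    intro u v huv x
    have hwlt : (u:ℕ) + 1 < n := by have := v.isLt; omega
    set w : Fin n := ⟨(u:ℕ)+1, hwlt⟩ with hw
    have hwval : (w:ℕ) = (u:ℕ) + 1 := rfl
    have h1 : u ≠ w := Fin.ne_of_val_ne (by omega)
    have h3 : u ≠ v := Fin.ne_of_val_ne (by omega)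
    have hconj : Equiv.swap u v = Equiv.swap w v * Equiv.swap u w * Equiv.swap w v := by
      have hc := Equiv.swap_apply_apply (Equiv.swap w v) u w
      rw [Equiv.swap_apply_of_ne_of_ne h1 h3, Equiv.swap_apply_left, Equiv.swap_inv] at hc
      rw [← hc]
    rw [hconj]
    have hcomp1 : x ∘ ⇑(Equiv.swap w v * Equiv.swap u w * Equiv.swap w v)
        = ((x ∘ Equiv.swap w v) ∘ Equiv.swap u w) ∘ Equiv.swap w v := rfl
    rw [hcomp1]
    rw [ih w v (by omega) _]
    rw [facSchur_swap_adj hlam a u w rfl _]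
    rw [ih w v (by omega) x]

lemma facSchur_perm (hlam : Antitone lam) (a : ℤ → R) (σ : Equiv.Perm (Fin n))
    (x : Fin n → R) :
    facSchur n lam (x ∘ σ) a = facSchur n lam x a := by
  have H : ∀ σ : Equiv.Perm (Fin n), ∀ x : Fin n → R,
      facSchur n lam (x ∘ σ) a = facSchur n lam x a := by
    intro σ
    refine Equiv.Perm.swap_induction_on σ (fun x => rfl) ?_
    intro f p q hpq ih x
    have hcomp : x ∘ ⇑(Equiv.swap p q * f) = (x ∘ Equiv.swap p q) ∘ f := rfl
    rw [hcomp, ih (x ∘ Equiv.swap p q), facSchur_swap_any hlam a p q hpq x]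
  exact H σ x

end Symmetry

end FacSchurAux

/-- vanishing of the factorial Schur function: if `λ ⊄ μ` then
`s_λ(a_μ|a) = 0`, where `(a_μ)_i = a_{n+1-i+μ_i}` (`1`-based; `i : Fin n` is `0`-based). -/
theorem stmt2 (n : ℕ) (lam mu : Fin n → ℕ) (hlam : Antitone lam) (hmu : Antitone mu)
    (hnotsub : ¬ ∀ i : Fin n, lam i ≤ mu i)
    {R : Type*} [CommRing R] (a : ℤ → R) :
    facSchur n lam (fun i => a ((n : ℤ) - (i : ℕ) + mu i)) a = 0 := by
  obtain ⟨r, hr⟩ := not_forall.mp hnotsub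
  have hrlt : mu r < lam r := by omega
  have hn : 0 < n := r.pos
  rw [← FacSchurAux.facSchur_perm hlam a Fin.revPerm (fun i => a ((n : ℤ) - (i : ℕ) + mu i))]
  have hxeq : ((fun i : Fin n => a ((n : ℤ) - (i : ℕ) + mu i)) ∘ Fin.revPerm)
      = fun t : Fin n => a ((t:ℤ) + 1 + (mu (Fin.rev t) : ℤ)) := by
    funext t
    show a ((n : ℤ) - ((Fin.rev t : ℕ) : ℤ) + mu (Fin.rev t)) = _
    congr 1
    rw [Fin.val_rev]
    have htn : (t:ℕ) + 1 ≤ n := t.isLt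
    rw [Nat.cast_sub htn]
    push_cast
    ring
  rw [hxeq, facSchur]
  refine Finset.sum_eq_zero (fun T _ => ?_)
  have hvanish : ∃ (i : Fin n) (j : Fin (lam i)),
      ((mu (Fin.rev (T.entry i j)) : ℤ)) = (j:ℤ) - (i:ℤ) := by
    by_contra hno
    push_neg at hno
    have claimA : ∀ (jv : ℕ) (i : Fin n) (hj : jv < lam i),
        (jv:ℤ) - (i:ℤ) < (mu (Fin.rev (T.entry i ⟨jv, hj⟩)) : ℤ) := by
      intro jv
      induction jv with
      | zero =>
        intro i hj
        have hne := hno i ⟨0, hj⟩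
        have hv0 : ((⟨0, hj⟩ : Fin (lam i)) : ℕ) = 0 := rfl
        omega
      | succ jv ihj =>
        intro i hj
        have hj' : jv < lam i := by omega
        have hle : T.entry i ⟨jv, hj'⟩ ≤ T.entry i ⟨jv+1, hj⟩ :=
          T.rowWeak i ⟨jv, hj'⟩ ⟨jv+1, hj⟩ (Fin.mk_le_mk.mpr (by omega))
        have hmono : mu (Fin.rev (T.entry i ⟨jv, hj'⟩))
            ≥ mu (Fin.rev (T.entry i ⟨jv+1, hj⟩)) → True := fun _ => trivial
        have hmono' : mu (Fin.rev (T.entry i ⟨jv, hj'⟩))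
            ≤ mu (Fin.rev (T.entry i ⟨jv+1, hj⟩)) := hmu (Fin.rev_le_rev.mpr hle)
        have hprev := ihj i hj'
        have hne := hno i ⟨jv+1, hj⟩
        have hv1 : ((⟨jv+1, hj⟩ : Fin (lam i)) : ℕ) = jv + 1 := rfl
        have hv0 : ((⟨jv, hj'⟩ : Fin (lam i)) : ℕ) = jv := rfl
        omega
    set i0 : Fin n := ⟨0, hn⟩ with hi0
    have hc0 : mu r < lam i0 := lt_of_lt_of_le hrlt (hlam (Fin.le_def.mpr (Nat.zero_le _)))
    have hlamd : ∀ (dv : ℕ) (hd : dv ≤ (r:ℕ)),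
        mu r < lam ⟨dv, lt_of_le_of_lt hd r.isLt⟩ := by
      intro dv hd
      exact lt_of_lt_of_le hrlt (hlam (Fin.le_def.mpr hd))
    have chain : ∀ (dv : ℕ) (hd : dv ≤ (r:ℕ)),
        (T.entry i0 ⟨mu r, hc0⟩ : ℕ) + dv
          ≤ (T.entry ⟨dv, lt_of_le_of_lt hd r.isLt⟩ ⟨mu r, hlamd dv hd⟩ : ℕ) := by
      intro dv
      induction dv with
      | zero =>
        intro hd
        exact Nat.le_of_eq rfl
      | succ dv ihd =>
        intro hd
        have hd' : dv ≤ (r:ℕ) := by omega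
        have hcol := T.colStrict ⟨dv, lt_of_le_of_lt hd' r.isLt⟩
          ⟨dv+1, lt_of_le_of_lt hd r.isLt⟩ (Fin.mk_lt_mk.mpr (by omega))
          ⟨mu r, hlamd (dv+1) hd⟩ (hlamd dv hd')
        have hcol' : (T.entry ⟨dv, lt_of_le_of_lt hd' r.isLt⟩ ⟨mu r, hlamd dv hd'⟩ : ℕ)
            < (T.entry ⟨dv+1, lt_of_le_of_lt hd r.isLt⟩ ⟨mu r, hlamd (dv+1) hd⟩ : ℕ) :=
          Fin.lt_def.mp hcol
        have := ihd hd'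
        omega
    have hfinal := chain (r:ℕ) (le_refl _)
    have hbound : (T.entry ⟨(r:ℕ), lt_of_le_of_lt (le_refl _) r.isLt⟩
        ⟨mu r, hlamd (r:ℕ) (le_refl _)⟩ : ℕ) < n := Fin.isLt _
    have hA := claimA (mu r) i0 hc0
    have hi0val : ((i0 : Fin n) : ℕ) = 0 := rfl
    have hrev : (r:ℕ) ≤ ((Fin.rev (T.entry i0 ⟨mu r, hc0⟩)) : ℕ) := by
      rw [Fin.val_rev]
      omega
    have hmur : mu (Fin.rev (T.entry i0 ⟨mu r, hc0⟩)) ≤ mu r :=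
      hmu (Fin.le_def.mpr hrev)
    omega
  obtain ⟨i, j, hij⟩ := hvanish
  refine Finset.prod_eq_zero (Finset.mem_univ i) ?_
  refine Finset.prod_eq_zero (Finset.mem_univ j) ?_
  rw [show ((T.entry i j : ℤ) + 1 + (mu (Fin.rev (T.entry i j)) : ℤ))
    = (T.entry i j : ℤ) + 1 + (j:ℤ) - (i:ℤ) by omega]
  exact sub_self _
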